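/- For n ≥ 2 and 2 ≤ j ≤ n, ∑_{r=j}^{n} (n/(n-1))^n · (r/n) · (n_[r]/n^r) · (1/j) · D_{r-j}/(r-j)! = (1/j) · n_[j]/(n-1)^j. In words: the expected number of j-cycles in the core of the screaming-toes random mapping equals n_[j] / (j·(n-1)^j). -/

import Mathlib

open Finset

/-- Derangement number `D k = k! * ∑_{j=0}^k (-1)^j/j!`, as a real number. -/
noncomputable def derNum (k : ℕ) : ℝ :=
  (k.factorial : ℝ) * ∑ j ∈ Finset.range (k + 1), (-1 : ℝ) ^ j / (j.factorial : ℝ)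

lemma derNum_div (k : ℕ) : derNum k / (k.factorial : ℝ)
    = ∑ i ∈ Finset.range (k + 1), (-1 : ℝ) ^ i / (i.factorial : ℝ) := by
  have h : (k.factorial : ℝ) ≠ 0 := by positivity
  rw [derNum, mul_comm, mul_div_assoc, div_self h, mul_one]

lemma descFactorial_add_eq (n j : ℕ) : ∀ i, n.descFactorial (j + i)
    = n.descFactorial j * (n - j).descFactorial i := by
  intro i
  induction i with
  | zero => simp
  | succ i ih =>
    rw [show j + (i+1) = (j+i)+1 from rfl, Nat.descFactorial_succ, ih,
      Nat.descFactorial_succ, show n - (j+i) = n - j - i from by omega]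
    ring

lemma sumT (n : ℕ) (hn : 1 ≤ n) : ∀ k m, m + k = n →
    ∑ r ∈ Icc m n, (r : ℝ) * n.descFactorial r / (n:ℝ) ^ r
      = (n:ℝ) * n.descFactorial m / (n:ℝ) ^ m := by
  have hn0 : (n:ℝ) ≠ 0 := by positivity
  intro k
  induction k with
  | zero =>
    intro m hm
    obtain rfl : m = n := by omega
    simp [Finset.Icc_self]
  | succ k ih =>
    intro m hm
    have hmn : m ≤ n := by omega
    have hIcc : Icc m n = insert m (Icc (m+1) n) := by
      rw [Finset.Icc_add_one_left_eq_Ioc, Finset.Ioc_insert_left hmn]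
    rw [hIcc, Finset.sum_insert (by simp), ih (m+1) (by omega)]
    have hdf : (n.descFactorial (m+1) : ℝ) = ((n:ℝ) - m) * n.descFactorial m := by
      rw [Nat.descFactorial_succ]
      push_cast [Nat.cast_sub hmn]
      ring
    rw [hdf, pow_succ]
    field_simp
    ring

theorem stmt_6 (n j : ℕ) (hn : 2 ≤ n) (hj2 : 2 ≤ j) (hjn : j ≤ n) :
    ∑ r ∈ Finset.Icc j n,
        ((n : ℝ) / ((n : ℝ) - 1)) ^ n * ((r : ℝ) / n) *
          ((n.descFactorial r : ℝ) / (n : ℝ) ^ r) * (1 / (j : ℝ)) *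
          (derNum (r - j) / ((r - j).factorial : ℝ))
    = (1 / (j : ℝ)) * ((n.descFactorial j : ℝ) / ((n : ℝ) - 1) ^ j) := by
  have hn0 : (n:ℝ) ≠ 0 := by positivity
  have hn2 : (2:ℝ) ≤ (n:ℝ) := by exact_mod_cast hn
  have hn1 : (n:ℝ) - 1 ≠ 0 := by linarith
  have hj0 : (j:ℝ) ≠ 0 := by positivity
  set K : ℝ := ((n : ℝ) / ((n : ℝ) - 1)) ^ n with hK
  -- Step 1: expand derNum and distribute
  have step1 : ∀ r ∈ Icc j n,
      K * ((r : ℝ) / n) * ((n.descFactorial r : ℝ) / (n : ℝ) ^ r) * (1 / (j : ℝ)) *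
        (derNum (r - j) / ((r - j).factorial : ℝ))
      = ∑ i ∈ Finset.range (r - j + 1),
          (K * (1/(j:ℝ)) / n) * ((r : ℝ) * n.descFactorial r / (n:ℝ) ^ r) *
            ((-1:ℝ) ^ i / (i.factorial : ℝ)) := by
    intro r hr
    rw [derNum_div, Finset.mul_sum]
    apply Finset.sum_congr rfl
    intro i _
    ring
  rw [Finset.sum_congr rfl step1]
  -- Step 2: swap sums
  rw [Finset.sum_comm' (t' := Finset.range (n - j + 1)) (s' := fun i => Icc (j + i) n)
    (by intro r i; simp only [Finset.mem_Icc, Finset.mem_range]; omega)]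
  -- Step 3: evaluate inner sum via sumT
  have step3 : ∀ i ∈ Finset.range (n - j + 1),
      ∑ r ∈ Icc (j + i) n,
        (K * (1/(j:ℝ)) / n) * ((r : ℝ) * n.descFactorial r / (n:ℝ) ^ r) *
          ((-1:ℝ) ^ i / (i.factorial : ℝ))
      = (K * (1/(j:ℝ)) * (n.descFactorial j : ℝ) / (n:ℝ) ^ j) *
          (((n - j).choose i : ℝ) * (-1/(n:ℝ)) ^ i * (1:ℝ) ^ (n - j - i)) := by
    intro i hi
    have hji : j + i ≤ n := by simp only [Finset.mem_range] at hi; omega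
    have : ∑ r ∈ Icc (j + i) n, ((K * (1/(j:ℝ)) / n) * ((r : ℝ) * n.descFactorial r / (n:ℝ) ^ r)
          * ((-1:ℝ) ^ i / (i.factorial : ℝ)))
        = (K * (1/(j:ℝ)) / n) * ((-1:ℝ) ^ i / (i.factorial : ℝ)) *
          ∑ r ∈ Icc (j + i) n, ((r : ℝ) * n.descFactorial r / (n:ℝ) ^ r) := by
      rw [Finset.mul_sum]; apply Finset.sum_congr rfl; intro r _; ring
    have hch : ((n - j).descFactorial i : ℝ) = (i.factorial : ℝ) * ((n - j).choose i : ℝ) := by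
      exact_mod_cast congrArg (Nat.cast (R := ℝ)) (Nat.descFactorial_eq_factorial_mul_choose (n - j) i)
    rw [this, sumT n (by omega) (n - (j+i)) (j+i) (by omega),
      descFactorial_add_eq n j i]
    have hfi : (i.factorial : ℝ) ≠ 0 := by positivity
    rw [pow_add]
    push_cast [hch]
    rw [div_pow, one_pow]
    field_simp
  rw [Finset.sum_congr rfl step3, ← Finset.mul_sum]
  -- Step 4: binomial theorem
  have hbin : ∑ i ∈ Finset.range (n - j + 1),
      (((n - j).choose i : ℝ) * (-1/(n:ℝ)) ^ i * (1:ℝ) ^ (n - j - i))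
      = ((-1/(n:ℝ)) + 1) ^ (n - j) := by
    rw [add_pow]
    apply Finset.sum_congr rfl
    intro i _
    ring
  rw [hbin]
  -- Step 5: final algebra
  have h1 : ((-1/(n:ℝ)) + 1) = ((n:ℝ) - 1) / n := by field_simp; ring
  rw [h1, hK]
  have hnn : ((n:ℝ))^n = (n:ℝ)^j * (n:ℝ)^(n-j) := by rw [← pow_add]; congr 1; omega
  have hmm : ((n:ℝ) - 1)^n = ((n:ℝ)-1)^j * ((n:ℝ)-1)^(n-j) := by
    rw [← pow_add]; congr 1; omega
  rw [div_pow, div_pow, hnn, hmm]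
  have hp1 : ((n:ℝ))^(n-j) ≠ 0 := by positivity
  have hp2 : ((n:ℝ) - 1)^(n-j) ≠ 0 := pow_ne_zero _ hn1
  have hp3 : ((n:ℝ))^j ≠ 0 := by positivity
  have hp4 : ((n:ℝ) - 1)^j ≠ 0 := pow_ne_zero _ hn1
  field_simp
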